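/- Suppose λ_Q < 0 and the convex relaxation min { f(y) : ‖y‖ ≤ 1, Ay − b ∈ 𝒦 } has an optimal solution y* with ‖y*‖ = 1. Then this relaxation is tight: its optimal value equals min { h(y) : ‖y‖ ≤ 1, Ay − b ∈ 𝒦 }. Conversely, if the relaxation is tight then some optimal solution of the relaxation has unit norm. -/

import Mathlib

open Matrix

theorem conic_TRS_tight_iff_unit_norm_optimal {n m : ℕ} (Q : Matrix (Fin n) (Fin n) ℝ)
    (g : EuclideanSpace ℝ (Fin n)) (lamQ : ℝ)
    (A : Matrix (Fin m) (Fin n) ℝ) (b : Fin m → ℝ) (K : Set (Fin m → ℝ))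
    (hQ : Q.IsSymm)
    (hlb : ∀ y : EuclideanSpace ℝ (Fin n), lamQ * ‖y‖ ^ 2 ≤ y ⬝ᵥ Q.mulVec y)
    (hev : ∃ v : EuclideanSpace ℝ (Fin n), v ≠ 0 ∧ Q.mulVec v = lamQ • (v : Fin n → ℝ))
    (hneg : lamQ < 0)
    (hKclosed : IsClosed K) (hKconv : Convex ℝ K)
    (hKcone : ∀ x ∈ K, ∀ c : ℝ, 0 ≤ c → c • x ∈ K)
    (h f : EuclideanSpace ℝ (Fin n) → ℝ)
    (hh : ∀ y, h y = y ⬝ᵥ Q.mulVec y + 2 * (g ⬝ᵥ y))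
    (hf : ∀ y, f y = y ⬝ᵥ (Q - lamQ • (1 : Matrix (Fin n) (Fin n) ℝ)).mulVec y
        + 2 * (g ⬝ᵥ y) + lamQ)
    (S : Set (EuclideanSpace ℝ (Fin n)))
    (hS : S = {y : EuclideanSpace ℝ (Fin n) | ‖y‖ ≤ 1 ∧ A.mulVec y - b ∈ K})
    (hSne : S.Nonempty) :
    (∃ ystar ∈ S, (∀ y ∈ S, f ystar ≤ f y) ∧ ‖ystar‖ = 1) ↔
      sInf (h '' S) = sInf (f '' S) := by

  have hns : ∀ y : EuclideanSpace ℝ (Fin n), ‖y‖ ^ 2 = (y : Fin n → ℝ) ⬝ᵥ (y : Fin n → ℝ) := by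
    intro y
    rw [EuclideanSpace.norm_eq, Real.sq_sqrt (by positivity)]
    simp [dotProduct, Real.norm_eq_abs, sq_abs, sq]
  have key : ∀ y : EuclideanSpace ℝ (Fin n), f y = h y + lamQ * (1 - ‖y‖ ^ 2) := by
    intro y
    rw [hf, hh, hns]
    simp only [sub_mulVec, dotProduct_sub, smul_mulVec, one_mulVec, dotProduct_smul,
      smul_eq_mul]
    ring
  have hcoord : ∀ j, Continuous fun y : EuclideanSpace ℝ (Fin n) => y j := fun j =>
    (continuous_apply j).comp (PiLp.continuous_ofLp 2 _)
  have hhc : Continuous h := by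
    have : h = fun y : EuclideanSpace ℝ (Fin n) =>
        (∑ i, y i * ∑ j, Q i j * y j) + 2 * ∑ i, g i * y i := by
      funext y; rw [hh]; simp [dotProduct, mulVec]
    rw [this]
    exact ((continuous_finset_sum _ fun i _ => (hcoord i).mul
      (continuous_finset_sum _ fun j _ => continuous_const.mul (hcoord j))).add
      (continuous_const.mul (continuous_finset_sum _ fun i _ =>
        continuous_const.mul (hcoord i))))
  have hfc : Continuous f := by
    have : f = fun y : EuclideanSpace ℝ (Fin n) => h y + lamQ * (1 - ‖y‖ ^ 2) := funext key
    rw [this]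
    exact hhc.add (continuous_const.mul (continuous_const.sub ((continuous_norm).pow 2)))
  have hAc : Continuous fun y : EuclideanSpace ℝ (Fin n) => A.mulVec y - b := by
    refine Continuous.sub ?_ continuous_const
    refine continuous_pi fun i => ?_
    simpa [mulVec, dotProduct] using
      continuous_finset_sum Finset.univ fun j (_ : j ∈ Finset.univ) =>
        continuous_const.mul (hcoord j)
  have hSclosed : IsClosed S := by
    rw [hS]
    exact (isClosed_le continuous_norm continuous_const).inter (hKclosed.preimage hAc)
  have hScomp : IsCompact S := by
    refine IsCompact.of_isClosed_subset (isCompact_closedBall (0 : EuclideanSpace ℝ (Fin n)) 1)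
      hSclosed ?_
    rw [hS]
    intro y hy
    simpa [Metric.mem_closedBall, dist_zero_right] using hy.1
  have hle : ∀ y ∈ S, f y ≤ h y := by
    intro y hy
    rw [hS] at hy
    have h1 : ‖y‖ ^ 2 ≤ 1 := by
      have := hy.1
      nlinarith [norm_nonneg y]
    rw [key y]
    nlinarith
  constructor
  · rintro ⟨y0, hy0S, hy0min, hy0n⟩
    have hfy0 : f y0 = h y0 := by rw [key, hy0n]; ring
    have h1 : IsLeast (f '' S) (f y0) :=
      ⟨⟨y0, hy0S, rfl⟩, by rintro _ ⟨y, hyS, rfl⟩; exact hy0min y hyS⟩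
    have h2 : IsLeast (h '' S) (f y0) :=
      ⟨⟨y0, hy0S, hfy0.symm⟩, by
        rintro _ ⟨y, hyS, rfl⟩; exact (hy0min y hyS).trans (hle y hyS)⟩
    rw [h1.csInf_eq, h2.csInf_eq]
  · intro heq
    obtain ⟨z, hzS, hzmin⟩ := hScomp.exists_isMinOn hSne hhc.continuousOn
    have hzleast : IsLeast (h '' S) (h z) :=
      ⟨⟨z, hzS, rfl⟩, by rintro _ ⟨y, hyS, rfl⟩; exact hzmin hyS⟩
    have hbddf : BddBelow (f '' S) := (hScomp.image hfc).bddBelow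
    have h3 : sInf (f '' S) ≤ f z := csInf_le hbddf ⟨z, hzS, rfl⟩
    have h4 : h z ≤ f z := by
      calc h z = sInf (h '' S) := hzleast.csInf_eq.symm
        _ = sInf (f '' S) := heq
        _ ≤ f z := h3
    have h5 : f z = h z := le_antisymm (hle z hzS) h4
    have h6 : ‖z‖ ^ 2 = 1 := by
      have := key z
      rw [h5] at this
      have h7 : lamQ * (1 - ‖z‖ ^ 2) = 0 := by linarith
      rcases mul_eq_zero.mp h7 with h8 | h8
      · exact absurd h8 (ne_of_lt hneg)
      · linarith
    have h9 : ‖z‖ = 1 := by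
      have h10 : (‖z‖ - 1) * (‖z‖ + 1) = 0 := by nlinarith
      rcases mul_eq_zero.mp h10 with h11 | h11
      · linarith
      · nlinarith [norm_nonneg z]
    refine ⟨z, hzS, ?_, h9⟩
    intro y hyS
    calc f z = h z := h5
      _ = sInf (f '' S) := hzleast.csInf_eq.symm.trans heq
      _ ≤ f y := csInf_le hbddf ⟨y, hyS, rfl⟩
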